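/- For every function f : ℝ → ℝ, every k ≥ 1, and every top-less abstract value a ∈ OH_k, it holds that f(γ^{OH_k}(a)) = γ^{OH_k}(f^OH(a)); that is, f^OH is a complete abstraction of f on top-less abstract values. -/

import Mathlib

/-- The flat constant-propagation domain CP = ℝ ∪ {⊥, ⊤}. -/
inductive CP where
  | bot : CP
  | top : CP
  | val : ℝ → CP

/-- The flat partial order on CP: ⊥ ⊑ z ⊑ ⊤ for every z ∈ ℝ,
    distinct reals incomparable. -/
def CP.le : CP → CP → Prop
  | .bot, _ => True
  | _, .top => True
  | .val x, .val y => x = y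
  | _, _ => False

/-- Concretization of CP. -/
def gammaCP : CP → Set ℝ
  | .bot => ∅
  | .top => Set.univ
  | .val z => {z}

open Classical in
/-- Best abstraction of a set of reals in CP. -/
noncomputable def alphaCP (X : Set ℝ) : CP :=
  if X = ∅ then .bot
  else if h : ∃ z : ℝ, X = {z} then .val h.choose
  else .top

/-- Abstract counterpart on CP of a function f : ℝ → ℝ. -/
def fCP (f : ℝ → ℝ) : CP → CP
  | .bot => .bot
  | .top => .top
  | .val z => .val (f z)

/-- The one-hot abstract domain OH_k = (CP × CP)^k. -/
def OH (k : ℕ) : Type := Fin k → CP × CP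

/-- γ̂_i(a): concrete vectors whose i-th component was originally true. -/
def gammaHat {k : ℕ} (i : Fin k) (a : OH k) : Set (Fin k → ℝ) :=
  {x | x i ∈ gammaCP (a i).2 ∧ ∀ j : Fin k, j ≠ i → x j ∈ gammaCP (a j).1}

/-- Concretization of the one-hot abstract domain. -/
def gammaOH {k : ℕ} (a : OH k) : Set (Fin k → ℝ) :=
  ⋃ i : Fin k, gammaHat i a

/-- The one-hot tier with 1 in position i and 0 elsewhere. -/
def oneHot {k : ℕ} (i : Fin k) : Fin k → ℝ := fun j => if j = i then 1 else 0

/-- A vector is a one-hot tier if it has exactly one index set to 1 and 0 elsewhere. -/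
def IsOneHotTier {k : ℕ} (x : Fin k → ℝ) : Prop :=
  ∃! i : Fin k, x i = 1 ∧ ∀ j : Fin k, j ≠ i → x j = 0

/-- The abstract value a^X associated to a set X of one-hot tiers. -/
noncomputable def aX {k : ℕ} (X : Set (Fin k → ℝ)) : OH k :=
  fun i => (alphaCP ((fun x => x i) '' {x ∈ X | x i = 0}),
            alphaCP ((fun x => x i) '' {x ∈ X | x i = 1}))

/-- Abstract counterpart on OH_k of a function f : ℝ → ℝ. -/
def fOH {k : ℕ} (f : ℝ → ℝ) (a : OH k) : OH k :=
  fun i => (fCP f (a i).1, fCP f (a i).2)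

/-- An abstract value of OH_k is top-less when no ⊤ component occurs. -/
def TopLess {k : ℕ} (a : OH k) : Prop :=
  ∀ i : Fin k, (a i).1 ≠ CP.top ∧ (a i).2 ≠ CP.top

lemma fCP_mem (f : ℝ → ℝ) {c : CP} {x : ℝ} (hx : x ∈ gammaCP c) :
    f x ∈ gammaCP (fCP f c) := by
  cases c with
  | bot => exact absurd hx (by simp [gammaCP])
  | top => simp [gammaCP, fCP]
  | val z => simp [gammaCP, fCP] at hx ⊢; rw [hx]

lemma fCP_surj (f : ℝ → ℝ) {c : CP} (hc : c ≠ CP.top) {y : ℝ}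
    (hy : y ∈ gammaCP (fCP f c)) : ∃ x, x ∈ gammaCP c ∧ f x = y := by
  cases c with
  | bot => exact absurd hy (by simp [gammaCP, fCP])
  | top => exact absurd rfl hc
  | val z =>
    simp [gammaCP, fCP] at hy
    exact ⟨z, by simp [gammaCP], hy.symm⟩

/-- Theorem (completeness of f^OH on top-less values): for every f : ℝ → ℝ,
    every k ≥ 1 and every top-less a ∈ OH_k,
    f(γ^{OH_k}(a)) = γ^{OH_k}(f^OH(a)). -/
theorem fOH_complete {k : ℕ} (hk : 1 ≤ k) (f : ℝ → ℝ) (a : OH k)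
    (ha : TopLess a) :
    (fun x : Fin k → ℝ => f ∘ x) '' gammaOH a = gammaOH (fOH f a) := by
  ext y
  constructor
  · rintro ⟨x, hx, rfl⟩
    obtain ⟨i, hxi, hxj⟩ := Set.mem_iUnion.1 hx
    exact Set.mem_iUnion.2 ⟨i, fCP_mem f hxi, fun j hj => fCP_mem f (hxj j hj)⟩
  · intro hy
    obtain ⟨i, hyi, hyj⟩ := Set.mem_iUnion.1 hy
    set c : Fin k → CP := fun j => if j = i then (a j).2 else (a j).1 with hc
    have hct : ∀ j, c j ≠ CP.top := by
      intro j; by_cases h : j = i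
      · subst h; simp only [hc, if_pos rfl]; exact (ha j).2
      · simp only [hc, if_neg h]; exact (ha j).1
    have hyc : ∀ j, y j ∈ gammaCP (fCP f (c j)) := by
      intro j; by_cases h : j = i
      · subst h; simpa only [hc, if_true, fOH] using hyi
      · simpa only [hc, if_neg h, fOH] using hyj j h
    choose x hx hfx using fun j => fCP_surj f (hct j) (hyc j)
    refine ⟨x, Set.mem_iUnion.2 ⟨i, ?_, fun j hj => ?_⟩, funext hfx⟩
    · simpa only [hc, if_pos rfl] using hx i
    · simpa only [hc, if_neg hj] using hx j
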